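/- Let $V$ be the space of real homogeneous polynomials of degree $k$ in two variables $(u,v)$, and let $A=u\,\partial_v-v\,\partial_u$ act on $V$. If $k$ is odd, then $A$ is a linear isomorphism of $V$. If $k$ is even, then the range of $A$ has codimension one in $V$ and equals the subspace of polynomials $Q\in V$ whose average over circles vanishes, i.e. $\int_0^{2\pi}Q(R\cos\theta,R\sin\theta)\,d\theta=0$ for all $R>0$. -/

import Mathlib

open MvPolynomial

noncomputable section
namespace Stmt9Aux

abbrev P2 := MvPolynomial (Fin 2) ℝ

def Alm : P2 →ₗ[ℝ] P2 where
  toFun p := X 0 * pderiv 1 p - X 1 * pderiv 0 p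
  map_add' p q := by simp only [map_add]; ring
  map_smul' c p := by
    simp only [RingHom.id_apply, smul_sub, mul_smul_comm, Derivation.map_smul]

lemma Alm_apply (p : P2) : Alm p = X 0 * pderiv 1 p - X 1 * pderiv 0 p := rfl

lemma Alm_mul (p q : P2) : Alm (p * q) = p * Alm q + q * Alm p := by
  simp only [Alm, LinearMap.coe_mk, AddHom.coe_mk, pderiv_mul]; ring

lemma Alm_C (a : ℝ) : Alm (C a) = 0 := by simp [Alm]

lemma Alm_one : Alm 1 = 0 := by have := Alm_C 1; simpa using this

lemma Alm_X0 : Alm (X 0) = -(X 1) := by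
  simp [Alm, pderiv_X_self, pderiv_X_of_ne (show (1:Fin 2) ≠ 0 by decide),
    pderiv_X_of_ne (show (0:Fin 2) ≠ 1 by decide)]

lemma Alm_X1 : Alm (X 1) = X 0 := by
  simp [Alm, pderiv_X_self, pderiv_X_of_ne (show (1:Fin 2) ≠ 0 by decide),
    pderiv_X_of_ne (show (0:Fin 2) ≠ 1 by decide)]

lemma Alm_Q2 : Alm (X 0 ^ 2 + X 1 ^ 2) = 0 := by
  have h2 : ∀ i : Fin 2, Alm ((X i : P2) ^ 2) = 2 * X i * Alm (X i) := by
    intro i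
    rw [pow_two, Alm_mul]; ring
  rw [map_add, h2 0, h2 1, Alm_X0, Alm_X1]; ring

lemma Alm_pow (p : P2) (n : ℕ) : Alm (p ^ n) = (n : P2) * p ^ (n - 1) * Alm p := by
  induction n with
  | zero => simp [pow_zero, Alm_one]
  | succ n ih =>
    rw [pow_succ, Alm_mul, ih]
    cases n with
    | zero => simp
    | succ m =>
      have : (m + 1 : ℕ) - 1 = m := rfl
      have h2 : (m + 1 + 1 : ℕ) - 1 = m + 1 := rfl
      rw [this, h2]
      push_cast
      ring_nf

lemma Alm_Q2_pow (m : ℕ) : Alm ((X 0 ^ 2 + X 1 ^ 2) ^ m) = 0 := by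
  rw [Alm_pow, Alm_Q2]; ring

lemma hasDerivAt_eval (p : P2) (θ : ℝ) :
    HasDerivAt (fun t => eval ![Real.cos t, Real.sin t] p)
      (eval ![Real.cos θ, Real.sin θ] (Alm p)) θ := by
  induction p using MvPolynomial.induction_on with
  | C a => simpa [Alm_C] using hasDerivAt_const θ a
  | add p q hp hq => simpa [map_add] using hp.fun_add hq
  | mul_X p i hp =>
    fin_cases i
    · simp only [Fin.zero_eta]
      have hc : HasDerivAt Real.cos (-Real.sin θ) θ := Real.hasDerivAt_cos θ
      have := hp.mul hc
      have heq : Alm (p * X 0) = X 0 * Alm p - X 1 * p := by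
        rw [Alm_mul, Alm_X0]; ring
      simp only [heq, map_sub, map_mul, eval_X]
      refine HasDerivAt.congr_deriv (by exact this) ?_
      simp only [Matrix.cons_val_zero, Matrix.cons_val_one, Matrix.head_cons]
      ring
    · simp only [Fin.mk_one]
      have hc : HasDerivAt Real.sin (Real.cos θ) θ := Real.hasDerivAt_sin θ
      have := hp.mul hc
      have heq : Alm (p * X 1) = X 1 * Alm p + X 0 * p := by
        rw [Alm_mul, Alm_X1]; ring
      simp only [heq, map_add, map_mul, eval_X]
      refine HasDerivAt.congr_deriv (by exact this) ?_
      simp only [Matrix.cons_val_zero, Matrix.cons_val_one, Matrix.head_cons]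
      ring

lemma continuous_eval_circle (p : P2) :
    Continuous fun t => eval ![Real.cos t, Real.sin t] p := by
  have h : Differentiable ℝ fun t => eval ![Real.cos t, Real.sin t] p :=
    fun t => (hasDerivAt_eval p t).differentiableAt
  exact h.continuous

lemma isHom_pderiv {p : P2} {n : ℕ} (hp : p.IsHomogeneous n) (i : Fin 2) :
    (pderiv i p).IsHomogeneous (n - 1) := by
  conv_lhs => rw [← support_sum_monomial_coeff p]
  rw [map_sum]
  apply MvPolynomial.IsHomogeneous.sum
  intro d hd
  rw [pderiv_monomial]
  by_cases hdi : d i = 0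
  · rw [hdi]; simp only [Nat.cast_zero, mul_zero, monomial_zero]
    exact isHomogeneous_zero _ _ _
  · apply isHomogeneous_monomial
    have hdn : Finsupp.weight 1 d = n := hp (mem_support_iff.mp hd)
    have hle : Finsupp.single i 1 ≤ d := by
      rw [Finsupp.single_le_iff]; omega
    have hsub : (d - Finsupp.single i 1) + Finsupp.single i 1 = d :=
      tsub_add_cancel_of_le hle
    have hw : Finsupp.weight 1 (d - Finsupp.single i 1)
        + Finsupp.weight 1 (Finsupp.single i 1) = n := by
      rw [← map_add, hsub, hdn]
    have hws : (Finsupp.weight 1 (Finsupp.single i 1) : ℕ) = 1 := by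
      simp [Finsupp.weight_apply, Finsupp.sum_single_index]
    rw [Finsupp.degree_eq_weight_one, ← Pi.one_def]
    omega

lemma Alm_isHom {p : P2} {k : ℕ} (hp : p.IsHomogeneous k) : (Alm p).IsHomogeneous k := by
  rcases Nat.eq_zero_or_pos k with rfl | hk
  · have hzero : ∀ i : Fin 2, pderiv i p = 0 := by
      intro i
      have htd : p.totalDegree = 0 := Nat.le_zero.mp hp.totalDegree_le
      have hall := (totalDegree_eq_zero_iff _ p).mp htd
      conv_lhs => rw [← support_sum_monomial_coeff p]
      rw [map_sum]
      apply Finset.sum_eq_zero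
      intro d hd
      rw [pderiv_monomial, hall d hd i]
      simp
    rw [Alm_apply, hzero, hzero]
    simpa using isHomogeneous_zero (Fin 2) ℝ 0
  · have hX0 : (X 0 : P2).IsHomogeneous 1 := isHomogeneous_X ℝ 0
    have hX1 : (X 1 : P2).IsHomogeneous 1 := isHomogeneous_X ℝ 1
    have h1 : ((X 0 : P2) * pderiv 1 p).IsHomogeneous (1 + (k - 1)) :=
      hX0.mul (isHom_pderiv hp 1)
    have h0 : ((X 1 : P2) * pderiv 0 p).IsHomogeneous (1 + (k - 1)) :=
      hX1.mul (isHom_pderiv hp 0)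
    have hk1 : 1 + (k - 1) = k := by omega
    rw [hk1] at h1 h0
    rw [Alm_apply]
    exact h1.sub h0

lemma eval_smul_of_isHom {p : P2} {n : ℕ} (hp : p.IsHomogeneous n) (r : ℝ) (x : Fin 2 → ℝ) :
    eval (r • x) p = r ^ n * eval x p := by
  rw [eval_eq, eval_eq, Finset.mul_sum]
  apply Finset.sum_congr rfl
  intro d hd
  have hdn : Finsupp.weight 1 d = n := hp (mem_support_iff.mp hd)
  have hdeg : ∑ i ∈ d.support, d i = n := by
    rw [← Finsupp.degree_apply, Finsupp.degree_eq_weight_one, ← Pi.one_def, hdn]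
  have : ∏ i ∈ d.support, (r • x) i ^ d i
      = (∏ i ∈ d.support, r ^ d i) * ∏ i ∈ d.support, x i ^ d i := by
    rw [← Finset.prod_mul_distrib]
    exact Finset.prod_congr rfl fun i _ => by simp [mul_pow]
  rw [this, Finset.prod_pow_eq_pow_sum, hdeg]
  ring

lemma exists_polar (x : Fin 2 → ℝ) : ∃ r θ : ℝ, 0 ≤ r ∧ x = r • ![Real.cos θ, Real.sin θ] := by
  by_cases hx : x = 0
  · exact ⟨0, 0, le_refl 0, by simp [hx]⟩
  · set z : ℂ := ⟨x 0, x 1⟩ with hz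
    have hz0 : z ≠ 0 := by
      intro h
      apply hx
      have h0 : x 0 = 0 := congrArg Complex.re h
      have h1 : x 1 = 0 := congrArg Complex.im h
      funext i
      fin_cases i <;> simpa
    refine ⟨‖z‖, Complex.arg z, norm_nonneg z, ?_⟩
    have hc := Complex.cos_arg hz0
    have hs := Complex.sin_arg z
    funext i
    fin_cases i
    · show x 0 = ‖z‖ * Real.cos z.arg
      rw [hc, mul_comm, div_mul_cancel₀ _ (norm_ne_zero_iff.mpr hz0)]
    · show x 1 = ‖z‖ * Real.sin z.arg
      rw [hs, mul_comm, div_mul_cancel₀ _ (norm_ne_zero_iff.mpr hz0)]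

/-- If `Alm p = 0` then the circle values of `p` are constant. -/
lemma const_on_circle {p : P2} (h : Alm p = 0) (θ : ℝ) :
    eval ![Real.cos θ, Real.sin θ] p = eval ![1, 0] p := by
  have hdiff : Differentiable ℝ fun t => eval ![Real.cos t, Real.sin t] p :=
    fun t => (hasDerivAt_eval p t).differentiableAt
  have hderiv : ∀ t, deriv (fun t => eval ![Real.cos t, Real.sin t] p) t = 0 := by
    intro t
    have := (hasDerivAt_eval p t).deriv
    rw [this, h]
    simp
  have := is_const_of_deriv_eq_zero hdiff hderiv θ 0
  simpa using this

lemma eval_circle_Q2_pow (m : ℕ) (θ : ℝ) :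
    eval ![Real.cos θ, Real.sin θ] (((X 0 ^ 2 + X 1 ^ 2) ^ m : P2)) = 1 := by
  simp [Real.cos_sq_add_sin_sq]

/-- kernel elements for even degree are multiples of `(u²+v²)^m`. -/
lemma ker_even {p : P2} {m : ℕ} (hp : p.IsHomogeneous (m + m)) (h : Alm p = 0) :
    p = eval ![1, 0] p • ((X 0 ^ 2 + X 1 ^ 2) ^ m : P2) := by
  have hq : ((X 0 ^ 2 + X 1 ^ 2 : P2) ^ m).IsHomogeneous (m + m) := by
    have := ((isHomogeneous_X ℝ (0 : Fin 2)).pow 2 |>.add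
      ((isHomogeneous_X ℝ (1 : Fin 2)).pow 2)).pow m
    simpa [two_mul, Nat.mul_comm] using this
  apply MvPolynomial.funext
  intro x
  obtain ⟨r, θ, hr, rfl⟩ := exists_polar x
  rw [smul_eq_C_mul, map_mul, eval_C,
    eval_smul_of_isHom hp, eval_smul_of_isHom hq, const_on_circle h, eval_circle_Q2_pow]
  ring

/-- kernel elements for odd degree vanish. -/
lemma ker_odd {p : P2} {k : ℕ} (hk : Odd k) (hp : p.IsHomogeneous k) (h : Alm p = 0) :
    p = 0 := by
  have hc : eval ![1, 0] p = 0 := by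
    have hπ := const_on_circle h Real.pi
    rw [Real.cos_pi, Real.sin_pi] at hπ
    have hneg : (![(-1 : ℝ), 0] : Fin 2 → ℝ) = (-1 : ℝ) • ![1, 0] := by
      funext i; fin_cases i <;> simp
    rw [hneg, eval_smul_of_isHom hp, hk.neg_one_pow] at hπ
    linarith
  apply MvPolynomial.funext
  intro x
  obtain ⟨r, θ, hr, rfl⟩ := exists_polar x
  rw [eval_smul_of_isHom hp, const_on_circle h, hc, map_zero]
  ring

lemma Q2_pow_isHom (m : ℕ) :
    ((X 0 ^ 2 + X 1 ^ 2 : P2) ^ m).IsHomogeneous (m + m) := by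
  have := ((isHomogeneous_X ℝ (0 : Fin 2)).pow 2 |>.add
    ((isHomogeneous_X ℝ (1 : Fin 2)).pow 2)).pow m
  simpa [two_mul, Nat.mul_comm] using this

lemma findim (k : ℕ) : FiniteDimensional ℝ (homogeneousSubmodule (Fin 2) ℝ k) := by
  have hle : homogeneousSubmodule (Fin 2) ℝ k ≤ restrictTotalDegree (Fin 2) ℝ k := fun p hp =>
    (mem_restrictTotalDegree _ _ _).mpr
      (hp).totalDegree_le
  exact Submodule.finiteDimensional_of_le hle

end Stmt9Aux
end

open Stmt9Aux in
/-- The operator `A = u∂ᵥ − v∂ᵤ` preserves the space `V` of real homogeneous polynomials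
of degree `k` in two variables `(u,v)`; if `k` is odd it is a linear isomorphism of `V`;
if `k` is even its range on `V` equals the subspace of polynomials of zero average on all
circles, and this range has codimension one in `V` (there is `Q₀ ∈ V` not in the range
such that every `g ∈ V` is `c•Q₀` plus an element of the range). -/
theorem stmt9 (k : ℕ)
    (A : MvPolynomial (Fin 2) ℝ → MvPolynomial (Fin 2) ℝ)
    (hA : ∀ p, A p = X 0 * pderiv 1 p - X 1 * pderiv 0 p) :
    (∀ p ∈ homogeneousSubmodule (Fin 2) ℝ k, A p ∈ homogeneousSubmodule (Fin 2) ℝ k) ∧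
    (Odd k → ∀ q ∈ homogeneousSubmodule (Fin 2) ℝ k,
      ∃! p, p ∈ homogeneousSubmodule (Fin 2) ℝ k ∧ A p = q) ∧
    (Even k →
      ({q | q ∈ homogeneousSubmodule (Fin 2) ℝ k ∧
          ∃ p ∈ homogeneousSubmodule (Fin 2) ℝ k, A p = q} =
        {q | q ∈ homogeneousSubmodule (Fin 2) ℝ k ∧ ∀ R : ℝ, 0 < R →
          (∫ θ in (0:ℝ)..(2 * Real.pi),
            MvPolynomial.eval ![R * Real.cos θ, R * Real.sin θ] q) = 0}) ∧
      ∃ Q₀ ∈ homogeneousSubmodule (Fin 2) ℝ k,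
        (¬ ∃ p ∈ homogeneousSubmodule (Fin 2) ℝ k, A p = Q₀) ∧
        ∀ g ∈ homogeneousSubmodule (Fin 2) ℝ k,
          ∃ c : ℝ, ∃ p ∈ homogeneousSubmodule (Fin 2) ℝ k, g = c • Q₀ + A p) := by
  have hAeq : ∀ p, A p = Alm p := fun p => (hA p).trans (Alm_apply p).symm
  haveI := findim k
  have hmap : ∀ x ∈ homogeneousSubmodule (Fin 2) ℝ k,
      Alm x ∈ homogeneousSubmodule (Fin 2) ℝ k := fun x hx => Alm_isHom hx
  set Ahat : homogeneousSubmodule (Fin 2) ℝ k →ₗ[ℝ] homogeneousSubmodule (Fin 2) ℝ k :=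
    Alm.restrict hmap with hAhat
  refine ⟨fun p hp => by rw [hAeq]; exact Alm_isHom hp, ?_, ?_⟩
  · -- odd case
    intro hk q hq
    have hinj : Function.Injective Ahat := by
      rw [← LinearMap.ker_eq_bot]
      apply (Submodule.eq_bot_iff _).mpr
      intro x hx
      have hx0 : Alm (x : P2) = 0 := congrArg Subtype.val hx
      exact Subtype.ext (ker_odd hk x.2 hx0)
    obtain ⟨p, hp⟩ := (LinearMap.injective_iff_surjective).mp hinj ⟨q, hq⟩
    refine ⟨p.1, ⟨p.2, by rw [hAeq]; exact congrArg Subtype.val hp⟩, ?_⟩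
    rintro y ⟨hy, hyq⟩
    have h1 : Ahat ⟨y, hy⟩ = ⟨q, hq⟩ := Subtype.ext (show Alm y = q by rw [← hAeq]; exact hyq)
    exact congrArg Subtype.val (hinj (h1.trans hp.symm))
  · intro hk
    obtain ⟨m, hm⟩ := hk
    subst hm
    have hint : ∀ p : P2, IntervalIntegrable (fun θ => eval ![Real.cos θ, Real.sin θ] p)
        MeasureTheory.volume 0 (2*Real.pi) :=
      fun p => (continuous_eval_circle p).intervalIntegrable _ _
    set Lfun : P2 → ℝ :=
      fun p => ∫ θ in (0:ℝ)..(2*Real.pi), eval ![Real.cos θ, Real.sin θ] p with hLfun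
    have hLAlm : ∀ p : P2, Lfun (Alm p) = 0 := by
      intro p
      have hFTC := intervalIntegral.integral_eq_sub_of_hasDerivAt
        (f := fun t => eval ![Real.cos t, Real.sin t] p)
        (fun t _ => hasDerivAt_eval p t) (hint (Alm p))
      show (∫ θ in (0:ℝ)..(2*Real.pi), eval ![Real.cos θ, Real.sin θ] (Alm p)) = 0
      rw [hFTC]
      norm_num [Real.cos_two_pi, Real.sin_two_pi]
    set Q0 : P2 := (X 0 ^ 2 + X 1 ^ 2) ^ m with hQ0def
    have hLQ0 : Lfun Q0 = 2 * Real.pi := by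
      rw [hLfun]
      simp only [hQ0def, eval_circle_Q2_pow]
      simp
    have hLsmul : ∀ (c : ℝ) (p : P2), Lfun (c • p) = c * Lfun p := by
      intro c p
      rw [hLfun]
      simp only [smul_eq_C_mul, map_mul, eval_C]
      exact intervalIntegral.integral_const_mul c _
    have hLsub : ∀ p q : P2, Lfun (p - q) = Lfun p - Lfun q := by
      intro p q
      rw [hLfun]
      simp only [map_sub]
      exact intervalIntegral.integral_sub (hint p) (hint q)
    have hQ0 : Q0 ∈ homogeneousSubmodule (Fin 2) ℝ (m+m) := Q2_pow_isHom m
    set e0 : homogeneousSubmodule (Fin 2) ℝ (m+m) := ⟨Q0, hQ0⟩ with he0def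
    set Lhat : homogeneousSubmodule (Fin 2) ℝ (m+m) →ₗ[ℝ] ℝ :=
      { toFun := fun q => Lfun q.1
        map_add' := fun x y => by
          show Lfun (x.1 + y.1) = Lfun x.1 + Lfun y.1
          rw [hLfun]
          simp only [map_add]
          exact intervalIntegral.integral_add (hint x.1) (hint y.1)
        map_smul' := fun c x => by
          show Lfun (c • x.1) = c * Lfun x.1
          exact hLsmul c x.1 } with hLhat
    have hrange_le : LinearMap.range Ahat ≤ LinearMap.ker Lhat := by
      rintro x ⟨p, rfl⟩
      exact LinearMap.mem_ker.mpr (hLAlm p.1)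
    have hker : LinearMap.ker Ahat = Submodule.span ℝ {e0} := by
      apply le_antisymm
      · intro x hx
        have hx0 : Alm (x : P2) = 0 := congrArg Subtype.val (LinearMap.mem_ker.mp hx)
        have hxe := ker_even x.2 hx0
        rw [Submodule.mem_span_singleton]
        exact ⟨eval ![1, 0] (x : P2), (Subtype.ext hxe).symm⟩
      · rw [Submodule.span_le, Set.singleton_subset_iff]
        exact LinearMap.mem_ker.mpr (Subtype.ext (Alm_Q2_pow m))
    have he0ne : e0 ≠ 0 := by
      intro h
      have h0 : (Q0 : P2) = 0 := congrArg Subtype.val h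
      have h1 := congrArg (eval ![(1:ℝ), 0]) h0
      simp [hQ0def] at h1
    have hkerrank : Module.finrank ℝ (LinearMap.ker Ahat) = 1 := by
      rw [hker]; exact finrank_span_singleton he0ne
    have hLsurj : Function.Surjective Lhat := by
      intro x
      refine ⟨(x / (2 * Real.pi)) • e0, ?_⟩
      rw [map_smul]
      have he : Lhat e0 = 2 * Real.pi := hLQ0
      rw [he, smul_eq_mul]
      field_simp
    have hrard := LinearMap.finrank_range_add_finrank_ker Ahat
    have hrardL := LinearMap.finrank_range_add_finrank_ker Lhat
    have hLrank : Module.finrank ℝ (LinearMap.range Lhat) = 1 := by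
      rw [LinearMap.range_eq_top.mpr hLsurj]
      simp
    have heq : LinearMap.range Ahat = LinearMap.ker Lhat := by
      apply Submodule.eq_of_le_of_finrank_le hrange_le
      rw [hkerrank] at hrard
      rw [hLrank] at hrardL
      omega
    have hmemiff : ∀ q, q ∈ homogeneousSubmodule (Fin 2) ℝ (m+m) →
        ((∃ p ∈ homogeneousSubmodule (Fin 2) ℝ (m+m), A p = q) ↔ Lfun q = 0) := by
      intro q hq
      constructor
      · rintro ⟨p, hp, hApq⟩
        have hmem : (⟨q, hq⟩ : homogeneousSubmodule (Fin 2) ℝ (m+m)) ∈ LinearMap.range Ahat :=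
          ⟨⟨p, hp⟩, Subtype.ext (show Alm p = q by rw [← hAeq]; exact hApq)⟩
        rw [heq] at hmem
        exact LinearMap.mem_ker.mp hmem
      · intro h0
        have hmem : (⟨q, hq⟩ : homogeneousSubmodule (Fin 2) ℝ (m+m)) ∈ LinearMap.ker Lhat :=
          LinearMap.mem_ker.mpr h0
        rw [← heq] at hmem
        obtain ⟨p, hp⟩ := hmem
        exact ⟨p.1, p.2, by rw [hAeq]; exact congrArg Subtype.val hp⟩
    have hRsm : ∀ (R θ : ℝ), (![R * Real.cos θ, R * Real.sin θ] : Fin 2 → ℝ)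
        = R • ![Real.cos θ, Real.sin θ] := by
      intro R θ
      funext i
      fin_cases i <;> simp
    have hscale : ∀ q, q ∈ homogeneousSubmodule (Fin 2) ℝ (m+m) → ∀ R : ℝ,
        (∫ θ in (0:ℝ)..(2*Real.pi), eval ![R * Real.cos θ, R * Real.sin θ] q)
          = R ^ (m+m) * Lfun q := by
      intro q hq R
      rw [hLfun, ← intervalIntegral.integral_const_mul]
      apply intervalIntegral.integral_congr
      intro θ _
      simp only [hRsm R θ, eval_smul_of_isHom hq]
    refine ⟨?_, Q0, hQ0, ?_, ?_⟩
    · ext q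
      simp only [Set.mem_setOf_eq]
      constructor
      · rintro ⟨hq, hex⟩
        refine ⟨hq, fun R hR => ?_⟩
        rw [hscale q hq R, (hmemiff q hq).mp hex, mul_zero]
      · rintro ⟨hq, hzero⟩
        refine ⟨hq, (hmemiff q hq).mpr ?_⟩
        have h1 := hzero 1 one_pos
        rw [hscale q hq 1, one_pow, one_mul] at h1
        exact h1
    · rintro ⟨p, hp, hApQ⟩
      have h0 : Lfun Q0 = 0 := (hmemiff Q0 hQ0).mp ⟨p, hp, hApQ⟩
      rw [hLQ0] at h0
      have := Real.pi_pos
      linarith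
    · intro g hg
      set c : ℝ := Lfun g / (2 * Real.pi) with hc
      have hgmem : g - c • Q0 ∈ homogeneousSubmodule (Fin 2) ℝ (m+m) :=
        Submodule.sub_mem _ hg (Submodule.smul_mem _ _ hQ0)
      have hL0 : Lfun (g - c • Q0) = 0 := by
        rw [hLsub, hLsmul, hLQ0, hc]
        field_simp
        ring
      obtain ⟨p, hp, hApg⟩ := (hmemiff _ hgmem).mpr hL0
      refine ⟨c, p, hp, ?_⟩
      rw [hApg]
      abel
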